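/- arXiv:1605.01289 — 3 statements merged into one kernel-verified Lean document; each statement's English description precedes it below -/
import Mathlib

section
/- Let A be an abelian group and Γ a finite connected non-oriented bipartite graph with vertex set V = V₁ ⊔ V₂ and edge set E. For v ∈ V denote by I(v) the set of edges of Γ incident to v. If (a_v)_{v∈V} is a family of elements of A satisfying ∑_{v∈V₁} a_v = ∑_{v∈V₂} a_v, then there exists a family (x_e)_{e∈E} of elements of A such that for every vertex v ∈ V one has ∑_{e∈I(v)} x_e = a_v. -/
open scoped Classical

noncomputable section Aux

variable {A : Type*} [AddCommGroup A] {V : Type*} [Fintype V] (G : SimpleGraph V)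

/-- vertex-sum operator -/
def vS (x : G.edgeSet → A) (v : V) : A :=
  ∑ e ∈ Finset.univ.filter (fun e : G.edgeSet => v ∈ (e : Sym2 V)), x e

/-- transport of `c` along a walk, with alternating signs -/
def trp : {u w : V} → G.Walk u w → A → (G.edgeSet → A)
  | _, _, .nil, _ => 0
  | _, _, .cons h p, c =>
      (fun e => if e = (⟨_, (SimpleGraph.mem_edgeSet G).mpr h⟩ : G.edgeSet) then c else 0)
        + trp p (-c)

lemma vS_add (x y : G.edgeSet → A) (v : V) : vS G (x + y) v = vS G x v + vS G y v := by
  simp [vS, Finset.sum_add_distrib]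

lemma vS_ind (e₀ : G.edgeSet) (c : A) (v : V) :
    vS G (fun e => if e = e₀ then c else 0) v = if v ∈ (e₀ : Sym2 V) then c else 0 := by
  classical
  rw [vS, Finset.sum_ite_eq' _ e₀ (fun _ => c)]
  simp

lemma vS_trp {u w : V} (W : G.Walk u w) : ∀ (c : A) (v : V),
    vS G (trp G W c) v
      = (if v = u then c else 0)
        + (if v = w then (if Even W.length then -c else c) else 0) := by
  induction W with
  | nil =>
      intro c v
      simp only [trp, SimpleGraph.Walk.length_nil, Even.zero, if_true]
      have : vS G (0 : G.edgeSet → A) v = 0 := by simp [vS]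
      rw [this]; split_ifs <;> abel
  | @cons u u' w h p ih =>
      intro c v
      rw [trp, vS_add, vS_ind, ih (-c) v]
      have hne : u ≠ u' := h.ne
      have hmem : v ∈ (s(u, u') : Sym2 V) ↔ v = u ∨ v = u' := Sym2.mem_iff
      simp only [SimpleGraph.Walk.length_cons, Nat.even_add_one, hmem, neg_neg]
      by_cases hep : Even p.length <;>
        simp only [hep, not_true_eq_false, not_false_eq_true, if_true, if_false] <;>
        by_cases h1 : v = u <;> by_cases h2 : v = u' <;>
          simp_all <;> split_ifs <;> abel

lemma trp_parity (side : V → Bool)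
    (hbip : ∀ ⦃v w : V⦄, G.Adj v w → side v ≠ side w) :
    ∀ {u w : V} (W : G.Walk u w), Even W.length ↔ side u = side w := by
  intro u w W
  induction W with
  | nil => simp
  | @cons u u' w h p ih =>
      have hne := hbip h
      simp only [SimpleGraph.Walk.length_cons, Nat.even_add_one, ih]
      revert hne
      cases hu : side u <;> cases hu' : side u' <;> cases hw : side w <;> simp

end Aux

/-- **Lemme 1.1.** Let `A` be an abelian group and `Γ` a finite connected non-oriented
bipartite graph with vertex set `V = V₁ ⊔ V₂` (encoded by `side : V → Bool`) and edge set `E`.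
If `(a_v)` satisfies `∑_{v ∈ V₁} a_v = ∑_{v ∈ V₂} a_v`, then there is a family `(x_e)_{e ∈ E}`
with `∑_{e ∈ I(v)} x_e = a_v` for every vertex `v`. -/
theorem stmt_0 {A : Type*} [AddCommGroup A] {V : Type*} [Fintype V]
    (G : SimpleGraph V) (hconn : G.Connected)
    (side : V → Bool)
    (hbip : ∀ ⦃v w : V⦄, G.Adj v w → side v ≠ side w)
    (a : V → A)
    (hsum : ∑ v ∈ Finset.univ.filter (fun v => side v = true), a v
          = ∑ v ∈ Finset.univ.filter (fun v => side v = false), a v) :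
    ∃ x : G.edgeSet → A, ∀ v : V,
      ∑ e ∈ Finset.univ.filter (fun e : G.edgeSet => v ∈ (e : Sym2 V)), x e = a v := by
  classical
  obtain ⟨v₀⟩ := hconn.nonempty
  have hW : ∀ v : V, G.Walk v v₀ := fun v => ((hconn v v₀) : G.Reachable v v₀).some
  set W : ∀ v : V, G.Walk v v₀ := hW with hWdef
  refine ⟨∑ v' ∈ Finset.univ, trp G (W v') (a v'), fun v => ?_⟩
  have hsw : (∑ e ∈ Finset.univ.filter (fun e : G.edgeSet => v ∈ (e : Sym2 V)),
        (∑ v' ∈ Finset.univ, trp G (W v') (a v')) e)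
      = ∑ v' ∈ Finset.univ, vS G (trp G (W v') (a v')) v := by
    simp only [Finset.sum_apply, vS]
    rw [Finset.sum_comm]
  rw [hsw]
  have key : ∀ v' : V, vS G (trp G (W v') (a v')) v
      = (if v = v' then a v' else 0)
        + (if v = v₀ then (if side v' = side v₀ then -(a v') else a v') else 0) := by
    intro v'
    rw [vS_trp]
    simp only [trp_parity G side hbip (W v')]
  simp only [key]
  rw [Finset.sum_add_distrib, Finset.sum_ite_eq]
  simp only [Finset.mem_univ, if_true]
  have hzero : (∑ v' ∈ Finset.univ,
      (if v = v₀ then (if side v' = side v₀ then -(a v') else a v') else 0)) = 0 := by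
    by_cases hv : v = v₀
    · simp only [hv, if_true]
      rw [Finset.sum_ite]
      have : ∀ s : Bool,
          (∑ v' ∈ Finset.univ.filter (fun v' => side v' = s), -(a v'))
            + ∑ v' ∈ Finset.univ.filter (fun v' => ¬ side v' = s), a v' = 0 := by
        intro s
        have hfilter : Finset.univ.filter (fun v' : V => ¬ side v' = s)
            = Finset.univ.filter (fun v' : V => side v' = !s) := by
          apply Finset.filter_congr; intro x _; cases hx : side x <;> cases s <;> simp
        rw [hfilter, Finset.sum_neg_distrib]
        cases s
        · rw [show (!false) = true by rfl]; rw [hsum]; abel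
        · rw [show (!true) = false by rfl]; rw [hsum]; abel
      exact this (side v₀)
    · simp [hv]
  rw [hzero, add_zero]
end

section
/- Let A be an abelian group and Γ a finite connected bipartite graph with vertex set V = V₁ ⊔ V₂ and edge set E. Let Θ_A(Γ) be the subgroup of the direct sum ⊕_{e∈E} A consisting of the families (x_e)_{e∈E} such that for every vertex v ∈ V the sum of x_e over the set of edges incident to v is zero. If e₀ ∈ E is an edge such that the subgraph of Γ obtained by deleting the edge e₀ is still connected, then the restriction to Θ_A(Γ) of the projection p_{e₀} : ⊕_{e∈E} A → A onto the coordinate indexed by e₀ is a surjective group homomorphism that admits a group-theoretic section (it is split surjective). -/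
open scoped Classical

/-- The subgroup `Θ_A(Γ)` of `⊕_{e ∈ E} A` consisting of the families `(x_e)` whose sum over
the edges incident to each vertex vanishes. -/
noncomputable def Theta (A : Type*) [AddCommGroup A] {V : Type*} [Fintype V]
    (G : SimpleGraph V) : AddSubgroup (G.edgeSet → A) where
  carrier := {x | ∀ v : V,
    ∑ e ∈ Finset.univ.filter (fun e : G.edgeSet => v ∈ (e : Sym2 V)), x e = 0}
  zero_mem' := by intro v; simp
  add_mem' := by
    intro x y hx hy v
    simp only [Set.mem_setOf_eq, Pi.add_apply] at *
    rw [Finset.sum_add_distrib, hx v, hy v, add_zero]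
  neg_mem' := by
    intro x hx v
    simp only [Set.mem_setOf_eq, Pi.neg_apply] at *
    rw [Finset.sum_neg_distrib, hx v, neg_zero]

section Aux

variable {V : Type*} {A : Type*} [AddCommGroup A] (G : SimpleGraph V)

/-- Alternating chain along a walk. -/
noncomputable def chainFun : ∀ {u v : V}, G.Walk u v → A → G.edgeSet → A
  | _, _, SimpleGraph.Walk.nil, _ => 0
  | _, _, @SimpleGraph.Walk.cons _ _ u w _ _ p, b =>
      (fun e : G.edgeSet => if (e : Sym2 V) = s(u, w) then b else 0) + chainFun p (-b)

@[simp] lemma chainFun_nil {u : V} (b : A) :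
    chainFun G (SimpleGraph.Walk.nil : G.Walk u u) b = 0 := rfl

@[simp] lemma chainFun_cons {u w v : V} (h : G.Adj u w) (p : G.Walk w v) (b : A) :
    chainFun G (SimpleGraph.Walk.cons h p) b =
      (fun e : G.edgeSet => if (e : Sym2 V) = s(u, w) then b else 0) + chainFun G p (-b) := rfl

lemma chainFun_add {u v : V} (p : G.Walk u v) :
    ∀ b c : A, chainFun G p (b + c) = chainFun G p b + chainFun G p c := by
  induction p with
  | nil => simp
  | cons h p ih =>
    intro b c
    funext e
    simp only [chainFun_cons, neg_add, ih, Pi.add_apply]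
    split <;> abel

lemma chainFun_notMem {u v : V} (p : G.Walk u v) (e : G.edgeSet)
    (he : (e : Sym2 V) ∉ p.edges) : ∀ b : A, chainFun G p b e = 0 := by
  induction p with
  | nil => simp
  | cons h p ih =>
    simp only [SimpleGraph.Walk.edges_cons, List.mem_cons, not_or] at he
    intro b
    simp [chainFun_cons, he.1, ih he.2]

variable [Fintype V]

lemma boundary_single (c : Sym2 V) (hc : c ∈ G.edgeSet) (b : A) (w : V) :
    ∑ e ∈ Finset.univ.filter (fun e : G.edgeSet => w ∈ (e : Sym2 V)),
      (if (e : Sym2 V) = c then b else 0) = if w ∈ c then b else 0 := by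
  have : ∀ e : G.edgeSet, ((e : Sym2 V) = c) = (e = (⟨c, hc⟩ : G.edgeSet)) := by
    intro e; simp [Subtype.ext_iff]
  simp only [this]
  rw [Finset.sum_ite_eq' _ (⟨c, hc⟩ : G.edgeSet)]
  simp

lemma chainFun_boundary {u v : V} (p : G.Walk u v) (b : A) (w : V) :
    ∑ e ∈ Finset.univ.filter (fun e : G.edgeSet => w ∈ (e : Sym2 V)), chainFun G p b e =
      (if w = u then b else 0) - (if w = v then ((-1 : ℤ) ^ p.length) • b else 0) := by
  induction p generalizing b with
  | nil => simp
  | @cons u x v h p ih =>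
    simp only [chainFun_cons, Pi.add_apply, Finset.sum_add_distrib,
      boundary_single G s(u, x) (G.mem_edgeSet.2 h) b w, ih (-b),
      SimpleGraph.Walk.length_cons, pow_succ]
    have hne : u ≠ x := h.ne
    have hmem : w ∈ s(u, x) ↔ w = u ∨ w = x := Sym2.mem_iff
    have hpow : ((-1 : ℤ) ^ p.length * -1) • b = ((-1 : ℤ) ^ p.length) • (-b) := by
      rw [mul_smul]; simp
    rw [hpow]
    by_cases hwu : w = u <;> by_cases hwx : w = x
    · exact absurd (hwu ▸ hwx ▸ rfl : u = x) hne
    · subst hwu; simp [hmem, hne, hwx, sub_eq_add_neg]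
    · subst hwx; simp [hmem, hne.symm]; abel
    · simp [hmem, hwu, hwx]

lemma walk_odd_length {side : V → Bool}
    (hbip : ∀ ⦃v w : V⦄, G.Adj v w → side v ≠ side w)
    {u v : V} (p : G.Walk u v) : Odd p.length ↔ side u ≠ side v := by
  induction p with
  | nil => simp
  | @cons u x v h p ih =>
    have h1 : side u ≠ side x := hbip h
    rw [SimpleGraph.Walk.length_cons, Nat.odd_add_one, not_iff_comm, not_ne_iff, ih]
    cases hu : side u <;> cases hx : side x <;> cases hv : side v <;> simp_all

end Aux

/-- **Lemme 1.2 (i).** Let `Γ` be a finite connected bipartite graph and `e₀` an edge whose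
deletion keeps the graph connected.  Then the restriction to `Θ_A(Γ)` of the projection
`p_{e₀} : ⊕_{e ∈ E} A → A` is a split surjective group homomorphism. -/
theorem stmt_1 {A : Type*} [AddCommGroup A] {V : Type*} [Fintype V]
    (G : SimpleGraph V) (hconn : G.Connected)
    (side : V → Bool)
    (hbip : ∀ ⦃v w : V⦄, G.Adj v w → side v ≠ side w)
    (e₀ : G.edgeSet)
    (hdel : (G.deleteEdges {(e₀ : Sym2 V)}).Connected) :
    Function.Surjective
      ((Pi.evalAddMonoidHom (fun _ : G.edgeSet => A) e₀).comp (Theta A G).subtype)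
    ∧ ∃ s : A →+ Theta A G,
        ((Pi.evalAddMonoidHom (fun _ : G.edgeSet => A) e₀).comp
          (Theta A G).subtype).comp s = AddMonoidHom.id A := by
  obtain ⟨e, he⟩ := e₀
  induction e using Sym2.ind with
  | _ u v =>
  have hadj : G.Adj u v := G.mem_edgeSet.1 he
  obtain ⟨q⟩ := hdel.preconnected u v
  let p : G.Walk u v := q.transfer G (fun e he' =>
    SimpleGraph.edgeSet_mono (SimpleGraph.deleteEdges_le _) (q.edges_subset_edgeSet he'))
  have hedges : p.edges = q.edges := q.edges_transfer _
  have hnot : s(u, v) ∉ p.edges := by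
    intro hmem
    have := q.edges_subset_edgeSet (hedges ▸ hmem)
    rw [SimpleGraph.edgeSet_deleteEdges] at this
    exact this.2 rfl
  have hodd : Odd p.length := (walk_odd_length G hbip p).2 (hbip hadj)
  have hpow : ((-1 : ℤ) ^ p.length) = -1 := Odd.neg_one_pow hodd
  have hmemθ : ∀ a : A,
      ((fun e : G.edgeSet => if (e : Sym2 V) = s(u, v) then a else 0) + chainFun G p (-a))
        ∈ Theta A G := by
    intro a w
    simp only [Pi.add_apply, Finset.sum_add_distrib,
      boundary_single G s(u, v) he a w, chainFun_boundary G p (-a) w, hpow]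
    have hne : u ≠ v := hadj.ne
    have hmem2 : w ∈ s(u, v) ↔ w = u ∨ w = v := Sym2.mem_iff
    have : ((-1 : ℤ)) • (-a) = a := by simp
    rw [this]
    by_cases hwu : w = u <;> by_cases hwv : w = v
    · exact absurd (hwu ▸ hwv ▸ rfl : u = v) hne
    · subst hwu; simp [hmem2, hwv]
    · subst hwv; simp [hmem2, hne.symm]
    · simp [hmem2, hwu, hwv]
  refine ⟨?_, ⟨AddMonoidHom.mk' (fun a =>
      ⟨(fun e : G.edgeSet => if (e : Sym2 V) = s(u, v) then a else 0) + chainFun G p (-a),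
        hmemθ a⟩) ?_, ?_⟩⟩
  · intro a
    refine ⟨⟨_, hmemθ a⟩, ?_⟩
    simp only [AddMonoidHom.comp_apply, AddSubgroup.coe_subtype, Pi.evalAddMonoidHom_apply,
      Pi.add_apply, if_pos rfl]
    rw [chainFun_notMem G p ⟨s(u, v), he⟩ hnot (-a), add_zero]
    simp
  · intro a b
    apply Subtype.ext
    funext e
    simp only [neg_add, chainFun_add, AddSubgroup.coe_add, Pi.add_apply]
    split <;> abel
  · ext a
    simp only [AddMonoidHom.comp_apply, AddMonoidHom.mk'_apply, AddSubgroup.coe_subtype,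
      Pi.evalAddMonoidHom_apply, Pi.add_apply, if_pos rfl, AddMonoidHom.id_apply]
    rw [chainFun_notMem G p ⟨s(u, v), he⟩ hnot (-a), add_zero]
    simp
end

section
/- Let A be an abelian group and Γ a finite connected bipartite graph with vertex set V = V₁ ⊔ V₂ and edge set E. Let e₀ ∈ E be an edge such that the subgraph Γ′ of Γ obtained by deleting the edge e₀ is still connected. Let Θ_A(Γ) (resp. Θ_A(Γ′)) be the subgroup of ⊕_{e∈E} A (resp. of ⊕_{e∈E∖{e₀}} A) consisting of the families whose sum over the edges incident to each vertex vanishes. Then the sequence 0 → Θ_A(Γ′) → Θ_A(Γ) → A is exact, where Θ_A(Γ′) → Θ_A(Γ) is extension by zero at e₀ and Θ_A(Γ) → A is induced by the projection onto the coordinate indexed by e₀; consequently Θ_A(Γ) is isomorphic to Θ_A(Γ′) ⊕ A. -/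
open scoped Classical

/-- Extension by zero at the deleted edge `e₀`: a family indexed by the edges of
`Γ′ = Γ ∖ {e₀}` is extended to a family indexed by the edges of `Γ`, with value `0` at `e₀`. -/
noncomputable def extendByZero {A : Type*} [AddCommGroup A] {V : Type*}
    (G : SimpleGraph V) (e₀ : Sym2 V)
    (y : (G.deleteEdges {e₀}).edgeSet → A) : G.edgeSet → A :=
  fun e => if h : (e : Sym2 V) ∈ (G.deleteEdges {e₀}).edgeSet then y ⟨e, h⟩ else 0

set_option linter.unusedSectionVars false
set_option linter.unusedVariables false

section Aux
variable {A : Type*} [AddCommGroup A] {V : Type*} [Fintype V]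

/-- Indicator family supported at one edge. -/
noncomputable def edgeInd (G : SimpleGraph V) {u w : V} (_h : G.Adj u w) (c : A) :
    G.edgeSet → A :=
  fun e => if (e : Sym2 V) = s(u, w) then c else 0

lemma edgeInd_vsum (G : SimpleGraph V) {u w : V} (h : G.Adj u w) (c : A) (r : V) :
    ∑ e ∈ Finset.univ.filter (fun e : G.edgeSet => r ∈ (e : Sym2 V)), edgeInd G h c e
      = (if r = u then c else 0) + (if r = w then c else 0) := by
  classical
  have key : ∀ e : G.edgeSet, edgeInd G h c e
      = if e = (⟨s(u, w), h⟩ : G.edgeSet) then c else 0 := by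
    intro e; simp [edgeInd, Subtype.ext_iff]
  simp only [key]
  rw [Finset.sum_ite_eq' _ (⟨s(u, w), h⟩ : G.edgeSet) (fun _ => c)]
  have hne : u ≠ w := h.ne
  by_cases h1 : r = u <;> by_cases h2 : r = w <;>
    simp_all [Finset.mem_filter, Sym2.mem_iff]

lemma edgeInd_add (G : SimpleGraph V) {u w : V} (h : G.Adj u w) (c d : A) :
    edgeInd G h (c + d) = edgeInd G h c + edgeInd G h d := by
  funext e; simp only [edgeInd, Pi.add_apply]; split <;> simp

lemma edgeInd_apply_ne (G : SimpleGraph V) {u w : V} (h : G.Adj u w) (c : A)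
    (e : G.edgeSet) (hne : (e : Sym2 V) ≠ s(u, w)) : edgeInd G h c e = 0 :=
  if_neg hne

/-- The alternating-sign family attached to a walk in `G.deleteEdges s`. -/
noncomputable def walkFlow (G : SimpleGraph V) (s : Set (Sym2 V)) (g : V → A) :
    ∀ {u v : V}, (G.deleteEdges s).Walk u v → (G.edgeSet → A)
  | _, _, SimpleGraph.Walk.nil => 0
  | u, _, SimpleGraph.Walk.cons h p =>
      edgeInd G ((SimpleGraph.deleteEdges_adj.mp h).1) (g u) + walkFlow G s g p

lemma walkFlow_vsum (G : SimpleGraph V) (s : Set (Sym2 V)) (g : V → A)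
    (hg : ∀ ⦃x y : V⦄, G.Adj x y → g y = - g x) {u v : V}
    (p : (G.deleteEdges s).Walk u v) (r : V) :
    ∑ e ∈ Finset.univ.filter (fun e : G.edgeSet => r ∈ (e : Sym2 V)), walkFlow G s g p e
      = (if r = u then g u else 0) - (if r = v then g v else 0) := by
  induction p with
  | nil => simp [walkFlow]
  | @cons u w v h p ih =>
    have hG : G.Adj u w := (SimpleGraph.deleteEdges_adj.mp h).1
    have hgw : g w = - g u := hg hG
    have hne : u ≠ w := hG.ne
    simp only [walkFlow, Pi.add_apply, Finset.sum_add_distrib, ih, edgeInd_vsum G hG (g u) r]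
    by_cases h1 : r = u <;> by_cases h2 : r = w <;>
      simp_all <;> abel

lemma walkFlow_add (G : SimpleGraph V) (s : Set (Sym2 V)) (g₁ g₂ : V → A) {u v : V}
    (p : (G.deleteEdges s).Walk u v) :
    walkFlow G s (g₁ + g₂) p = walkFlow G s g₁ p + walkFlow G s g₂ p := by
  induction p with
  | nil => simp [walkFlow]
  | cons h p ih => simp only [walkFlow, Pi.add_apply, edgeInd_add, ih]; abel

lemma walkFlow_apply_mem (G : SimpleGraph V) (s : Set (Sym2 V)) (g : V → A) {u v : V}
    (p : (G.deleteEdges s).Walk u v) (e : G.edgeSet) (he : (e : Sym2 V) ∈ s) :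
    walkFlow G s g p e = 0 := by
  induction p with
  | nil => rfl
  | @cons u w v h p ih =>
    have hns : s(u, w) ∉ s := (SimpleGraph.deleteEdges_adj.mp h).2
    have : (e : Sym2 V) ≠ s(u, w) := fun hh => hns (hh ▸ he)
    simp [walkFlow, edgeInd, this, ih]

lemma vsum_extendByZero (G : SimpleGraph V) (e₀ : Sym2 V)
    (y : (G.deleteEdges {e₀}).edgeSet → A) (v : V) :
    ∑ e ∈ Finset.univ.filter (fun e : G.edgeSet => v ∈ (e : Sym2 V)),
        extendByZero G e₀ y e
      = ∑ e ∈ Finset.univ.filter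
          (fun e : (G.deleteEdges {e₀}).edgeSet => v ∈ (e : Sym2 V)), y e := by
  classical
  have hsub : (G.deleteEdges {e₀}).edgeSet ⊆ G.edgeSet := by
    rw [SimpleGraph.edgeSet_deleteEdges]; exact Set.diff_subset
  rw [← Finset.sum_filter_of_ne (p := fun e : G.edgeSet =>
      (e : Sym2 V) ∈ (G.deleteEdges {e₀}).edgeSet)
      (fun e _ hne => by
        by_contra hmem
        exact hne (dif_neg hmem))]
  rw [Finset.filter_filter]
  refine Finset.sum_bij' (fun e he => (⟨(e : Sym2 V), (Finset.mem_filter.mp he).2.2⟩ :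
      (G.deleteEdges {e₀}).edgeSet))
    (fun e he => (⟨(e : Sym2 V), hsub e.2⟩ : G.edgeSet)) ?_ ?_ ?_ ?_ ?_
  · intro e he; simpa using (Finset.mem_filter.mp he).2.1
  · intro e he
    refine Finset.mem_filter.mpr ⟨Finset.mem_univ _, ?_, e.2⟩
    simpa using (Finset.mem_filter.mp he).2
  · intro e he; rfl
  · intro e he; rfl
  · intro e he
    exact dif_pos (Finset.mem_filter.mp he).2.2

end Aux

section Aux2

variable {A : Type*} [AddCommGroup A] {V : Type*} [Fintype V]

lemma mem_Theta_iff {G : SimpleGraph V} {x : G.edgeSet → A} :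
    x ∈ Theta A G ↔ ∀ v : V,
      ∑ e ∈ Finset.univ.filter (fun e : G.edgeSet => v ∈ (e : Sym2 V)), x e = 0 :=
  Iff.rfl

lemma deleteEdges_edgeSet_subset (G : SimpleGraph V) (s : Set (Sym2 V)) :
    (G.deleteEdges s).edgeSet ⊆ G.edgeSet := by
  rw [SimpleGraph.edgeSet_deleteEdges]; exact Set.diff_subset

/-- Restriction of a family on the edges of `G` to the edges of `G.deleteEdges {e₀}`. -/
noncomputable def restrictTo (G : SimpleGraph V) (e₀ : Sym2 V)
    (x : G.edgeSet → A) : (G.deleteEdges {e₀}).edgeSet → A :=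
  fun e => x ⟨e, deleteEdges_edgeSet_subset G {e₀} e.2⟩

lemma restrictTo_extendByZero (G : SimpleGraph V) (e₀ : Sym2 V)
    (y : (G.deleteEdges {e₀}).edgeSet → A) :
    restrictTo G e₀ (extendByZero G e₀ y) = y := by
  funext e
  simp only [restrictTo, extendByZero]
  rw [dif_pos e.2]

lemma extendByZero_apply_e₀ (G : SimpleGraph V) (e₀ : G.edgeSet)
    (y : (G.deleteEdges {(e₀ : Sym2 V)}).edgeSet → A) :
    extendByZero G (e₀ : Sym2 V) y e₀ = 0 := by
  have : (e₀ : Sym2 V) ∉ (G.deleteEdges {(e₀ : Sym2 V)}).edgeSet := by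
    rw [SimpleGraph.edgeSet_deleteEdges]
    simp
  exact dif_neg this

lemma extendByZero_restrictTo (G : SimpleGraph V) (e₀ : G.edgeSet)
    (x : G.edgeSet → A) (hx : x e₀ = 0) :
    extendByZero G (e₀ : Sym2 V) (restrictTo G (e₀ : Sym2 V) x) = x := by
  funext e
  simp only [extendByZero, restrictTo]
  split
  · rfl
  · next h =>
    have : e = e₀ := by
      rw [SimpleGraph.edgeSet_deleteEdges] at h
      have := e.2
      apply Subtype.ext
      by_contra hne
      exact h ⟨e.2, by simpa [Subtype.ext_iff] using hne⟩
    rw [this, hx]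

lemma extend_mem_Theta_iff (G : SimpleGraph V) (e₀ : Sym2 V)
    (y : (G.deleteEdges {e₀}).edgeSet → A) :
    extendByZero G e₀ y ∈ Theta A G ↔ y ∈ Theta A (G.deleteEdges {e₀}) := by
  simp only [mem_Theta_iff, vsum_extendByZero]
  constructor <;> intro h v <;> convert h v

end Aux2

/-- **Inductive step of Lemme 1.2 (ii).** If `Γ′` is the graph obtained from the finite
connected bipartite graph `Γ` by deleting an edge `e₀` whose removal keeps `Γ` connected,
then the sequence `0 → Θ_A(Γ′) → Θ_A(Γ) → A` (extension by zero followed by the projection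
at `e₀`) is exact, and `Θ_A(Γ) ≅ Θ_A(Γ′) ⊕ A`. -/
theorem stmt_4 {A : Type*} [AddCommGroup A] {V : Type*} [Fintype V]
    (G : SimpleGraph V) (hconn : G.Connected)
    (side : V → Bool)
    (hbip : ∀ ⦃v w : V⦄, G.Adj v w → side v ≠ side w)
    (e₀ : G.edgeSet)
    (hdel : (G.deleteEdges {(e₀ : Sym2 V)}).Connected) :
    -- the extension-by-zero map sends `Θ_A(Γ′)` into `Θ_A(Γ)` ...
    (∀ y : (G.deleteEdges {(e₀ : Sym2 V)}).edgeSet → A,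
        y ∈ Theta A (G.deleteEdges {(e₀ : Sym2 V)}) →
        extendByZero G (e₀ : Sym2 V) y ∈ Theta A G) ∧
    -- ... injectively (exactness at `Θ_A(Γ′)`) ...
    Function.Injective
      (fun y : Theta A (G.deleteEdges {(e₀ : Sym2 V)}) =>
        extendByZero G (e₀ : Sym2 V) y.1) ∧
    -- ... with image the kernel of the projection at `e₀` (exactness at `Θ_A(Γ)`) ...
    (∀ x : G.edgeSet → A, x ∈ Theta A G →
        (x e₀ = 0 ↔ ∃ y ∈ Theta A (G.deleteEdges {(e₀ : Sym2 V)}),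
          extendByZero G (e₀ : Sym2 V) y = x)) ∧
    -- ... and consequently `Θ_A(Γ) ≅ Θ_A(Γ′) ⊕ A`.
    Nonempty (Theta A G ≃+ Theta A (G.deleteEdges {(e₀ : Sym2 V)}) × A) := by
  classical
  -- write `e₀ = s(u₀, v₀)`
  obtain ⟨e, h₀⟩ := e₀
  revert h₀
  induction e using Sym2.ind with
  | _ u₀ v₀ =>
  intro h₀ hdel
  have h₀' : G.Adj u₀ v₀ := h₀
  have hside : side u₀ ≠ side v₀ := hbip h₀'
  set e₀ : G.edgeSet := ⟨s(u₀, v₀), h₀⟩ with he₀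
  -- the three exactness statements
  have part1 : ∀ y : (G.deleteEdges {(e₀ : Sym2 V)}).edgeSet → A,
      y ∈ Theta A (G.deleteEdges {(e₀ : Sym2 V)}) →
      extendByZero G (e₀ : Sym2 V) y ∈ Theta A G :=
    fun y hy => (extend_mem_Theta_iff G _ y).mpr hy
  have part2 : Function.Injective
      (fun y : Theta A (G.deleteEdges {(e₀ : Sym2 V)}) =>
        extendByZero G (e₀ : Sym2 V) y.1) := by
    intro y z h
    apply Subtype.ext
    have := congrArg (restrictTo G (e₀ : Sym2 V)) h
    rwa [restrictTo_extendByZero, restrictTo_extendByZero] at this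
  have part3 : ∀ x : G.edgeSet → A, x ∈ Theta A G →
      (x e₀ = 0 ↔ ∃ y ∈ Theta A (G.deleteEdges {(e₀ : Sym2 V)}),
        extendByZero G (e₀ : Sym2 V) y = x) := by
    intro x hx
    constructor
    · intro hxe
      refine ⟨restrictTo G (e₀ : Sym2 V) x, ?_, extendByZero_restrictTo G e₀ x hxe⟩
      rw [← extend_mem_Theta_iff, extendByZero_restrictTo G e₀ x hxe]
      exact hx
    · rintro ⟨y, _, rfl⟩
      exact extendByZero_apply_e₀ G e₀ y
  refine ⟨part1, part2, part3, ?_⟩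
  -- the section `A → Θ_A(Γ)`
  have hreach := (hdel.preconnected u₀ v₀)
  let p : (G.deleteEdges {(e₀ : Sym2 V)}).Walk u₀ v₀ := hreach.some
  let g : A → V → A := fun a x => if side x = side u₀ then -a else a
  have hg : ∀ (a : A) ⦃x y : V⦄, G.Adj x y → g a y = - g a x := by
    intro a x y hxy
    have hne := hbip hxy
    simp only [g]
    cases hsx : side x <;> cases hsy : side y <;> cases hsu : side u₀ <;>
      simp_all
  let sec : A → G.edgeSet → A :=
    fun a => walkFlow G {(e₀ : Sym2 V)} (g a) p + edgeInd G h₀' a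
  have sec_e₀ : ∀ a : A, sec a e₀ = a := by
    intro a
    simp only [sec, Pi.add_apply]
    rw [walkFlow_apply_mem G _ _ p e₀ (by simp [he₀]), edgeInd]
    simp [he₀]
  have sec_mem : ∀ a : A, sec a ∈ Theta A G := by
    intro a v
    simp only [sec, Pi.add_apply, Finset.sum_add_distrib]
    rw [walkFlow_vsum G _ _ (hg a) p v, edgeInd_vsum G h₀' a v]
    have hgu : g a u₀ = -a := by simp [g]
    have hgv : g a v₀ = a := by simp [g, Ne.symm hside]
    rw [hgu, hgv]
    split_ifs <;> abel
  have sec_add : ∀ a b : A, sec (a + b) = sec a + sec b := by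
    intro a b
    have hgab : g (a + b) = g a + g b := by
      funext x
      simp only [g, Pi.add_apply]
      split <;> abel
    simp only [sec, hgab, walkFlow_add, edgeInd_add]
    funext e
    simp only [Pi.add_apply]
    abel
  -- the isomorphism
  refine ⟨⟨⟨fun x => (⟨restrictTo G (e₀ : Sym2 V) (x.1 - sec (x.1 e₀)), ?_⟩, x.1 e₀),
      fun ya => ⟨extendByZero G (e₀ : Sym2 V) ya.1.1 + sec ya.2, ?_⟩, ?_, ?_⟩, ?_⟩⟩
  · -- membership of the restriction
    have hz : (x.1 - sec (x.1 e₀)) e₀ = 0 := by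
      simp [Pi.sub_apply, sec_e₀]
    have hmem : x.1 - sec (x.1 e₀) ∈ Theta A G :=
      sub_mem x.2 (sec_mem _)
    rw [← extend_mem_Theta_iff, extendByZero_restrictTo G e₀ _ hz]
    exact hmem
  · exact add_mem (part1 _ ya.1.2) (sec_mem _)
  · -- left inverse
    intro x
    apply Subtype.ext
    have hz : (x.1 - sec (x.1 e₀)) e₀ = 0 := by
      simp [Pi.sub_apply, sec_e₀]
    simp only
    rw [extendByZero_restrictTo G e₀ _ hz]
    abel
  · -- right inverse
    rintro ⟨⟨y, hy⟩, a⟩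
    have hval : (extendByZero G (e₀ : Sym2 V) y + sec a) e₀ = a := by
      rw [Pi.add_apply, sec_e₀, extendByZero_apply_e₀ G e₀ y, zero_add]
    refine Prod.ext (Subtype.ext ?_) ?_
    · simp only [hval]
      rw [show extendByZero G (e₀ : Sym2 V) y + sec a - sec a
          = extendByZero G (e₀ : Sym2 V) y by abel]
      exact restrictTo_extendByZero G _ y
    · exact hval
  · -- additivity
    intro x y
    refine Prod.ext (Subtype.ext ?_) rfl
    funext e
    simp only [Prod.fst_add, restrictTo, Pi.sub_apply, Pi.add_apply, AddSubgroup.coe_add,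
      AddMemClass.mk_add_mk, sec_add]
    abel
end
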